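/- Let A ∈ P_fin,0(ℕ) and let b, c be positive integers with b ≠ 2c and 2·(max A) < c < b − max A. Then the set A ∪ (A + b) ∪ {c} is an atom of P_fin,0(ℕ). -/
import Mathlib


open Pointwise

/-- `A` is an atom of the restricted power monoid `P_fin,0(ℕ)` of finite subsets of `ℕ`
containing `0`, under set addition. -/
def IsAtom0 (A : Finset ℕ) : Prop :=
  0 ∈ A ∧ A ≠ {0} ∧
    ∀ X Y : Finset ℕ, 0 ∈ X → 0 ∈ Y → A = X + Y → X = {0} ∨ Y = {0}

/-- Let `A ∈ P_fin,0(ℕ)` and let `b, c` be positive integers with `b ≠ 2c` and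
`2·max A < c < b - max A`. Then `A ∪ (A + b) ∪ {c}` is an atom of `P_fin,0(ℕ)`. -/
theorem stmt_14 (A : Finset ℕ) (h0 : 0 ∈ A) (b c : ℕ) (hb : 0 < b) (hc : 0 < c)
    (hbc : b ≠ 2 * c)
    (h2 : 2 * A.max' ⟨0, h0⟩ < c) (h3 : c + A.max' ⟨0, h0⟩ < b) :
    IsAtom0 (A ∪ A.image (· + b) ∪ {c}) := by
  set m := A.max' ⟨0, h0⟩ with hm
  have hmA : m ∈ A := A.max'_mem _
  have hle : ∀ a ∈ A, a ≤ m := fun a ha => A.le_max' a ha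
  set S := A ∪ A.image (· + b) ∪ {c} with hSdef
  have hmc : m < c := by omega
  have hcb : c < b := by omega
  have hmemS : ∀ s, s ∈ S ↔ s ∈ A ∨ (∃ a ∈ A, a + b = s) ∨ s = c := by
    intro s
    simp only [hSdef, Finset.mem_union, Finset.mem_image, Finset.mem_singleton]
    exact or_assoc
  have hclass : ∀ s ∈ S, s ≤ m ∨ s = c ∨ ∃ a ∈ A, a + b = s := by
    intro s hs
    rcases (hmemS s).1 hs with h | ⟨a, ha, rfl⟩ | h
    · exact Or.inl (hle s h)
    · exact Or.inr (Or.inr ⟨a, ha, rfl⟩)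
    · exact Or.inr (Or.inl h)
  have hub : ∀ s ∈ S, s ≤ b + m := by
    intro s hs
    rcases hclass s hs with h | h | ⟨a, ha, rfl⟩
    · omega
    · omega
    · have := hle a ha; omega
  have htop : b + m ∈ S := (hmemS _).2 (Or.inr (Or.inl ⟨m, hmA, by ring⟩))
  have hcS : c ∈ S := (hmemS _).2 (Or.inr (Or.inr rfl))
  have hbS : b ∈ S := (hmemS _).2 (Or.inr (Or.inl ⟨0, h0, by ring⟩))
  have key : ∀ X Y : Finset ℕ, 0 ∈ X → 0 ∈ Y → S = X + Y →
      ∀ x₀ ∈ X, ∀ y₀ ∈ Y, x₀ + y₀ = b + m → x₀ ≤ m → X = {0} := by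
    intro X Y hX0 hY0 hXY x₀ hx₀ y₀ hy₀ hsum hx₀m
    have hXS : ∀ u ∈ X, u ∈ S := fun u hu => by
      have : u + 0 ∈ X + Y := Finset.add_mem_add hu hY0
      rw [← hXY] at this; simpa using this
    have hYS : ∀ v ∈ Y, v ∈ S := fun v hv => by
      have : 0 + v ∈ X + Y := Finset.add_mem_add hX0 hv
      rw [← hXY] at this; simpa using this
    have hXle : ∀ u ∈ X, u ≤ x₀ := by
      intro u hu
      have h1 : u + y₀ ∈ X + Y := Finset.add_mem_add hu hy₀
      rw [← hXY] at h1
      have := hub _ h1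
      omega
    have hcY : c ∈ Y := by
      have hc' : c ∈ X + Y := hXY ▸ hcS
      rcases Finset.mem_add.mp hc' with ⟨u, hu, v, hv, huv⟩
      rcases hclass u (hXS u hu) with h1 | h1 | ⟨a, ha, h1⟩
      · rcases hclass v (hYS v hv) with g1 | g1 | ⟨a', ha', g1⟩
        · omega
        · exact g1 ▸ hv
        · omega
      · have : u ≤ m := le_trans (hXle u hu) hx₀m
        omega
      · omega
    rw [Finset.eq_singleton_iff_unique_mem]
    refine ⟨hX0, fun u hu => ?_⟩
    have h1 : u + c ∈ X + Y := Finset.add_mem_add hu hcY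
    rw [← hXY] at h1
    have hum : u ≤ m := le_trans (hXle u hu) hx₀m
    rcases hclass _ h1 with h | h | ⟨a, ha, heq⟩
    · omega
    · omega
    · have := hle a ha; omega
  refine ⟨(hmemS 0).2 (Or.inl h0), ?_, ?_⟩
  · intro h
    have : c ∈ ({0} : Finset ℕ) := h ▸ hcS
    simp at this; omega
  · intro X Y hX0 hY0 hXY
    have hXS : ∀ u ∈ X, u ∈ S := fun u hu => by
      have : u + 0 ∈ X + Y := Finset.add_mem_add hu hY0
      rw [← hXY] at this; simpa using this
    have hYS : ∀ v ∈ Y, v ∈ S := fun v hv => by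
      have : 0 + v ∈ X + Y := Finset.add_mem_add hX0 hv
      rw [← hXY] at this; simpa using this
    have htopXY : b + m ∈ X + Y := hXY ▸ htop
    obtain ⟨x₀, hx₀, y₀, hy₀, hsum⟩ := Finset.mem_add.mp htopXY
    rcases hclass x₀ (hXS _ hx₀) with hx | hx | ⟨a, ha, hx⟩
    · rcases hclass y₀ (hYS _ hy₀) with hy | hy | ⟨a', ha', hy⟩
      · omega
      · omega
      · exact Or.inl (key X Y hX0 hY0 hXY x₀ hx₀ y₀ hy₀ hsum hx)
    · rcases hclass y₀ (hYS _ hy₀) with hy | hy | ⟨a', ha', hy⟩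
      · omega
      · -- x₀ = c, y₀ = c : contradiction via b
        exfalso
        have hbXY : b ∈ X + Y := hXY ▸ hbS
        obtain ⟨u, hu, v, hv, huv⟩ := Finset.mem_add.mp hbXY
        have hule : u ≤ c := by
          have h1 : u + y₀ ∈ X + Y := Finset.add_mem_add hu hy₀
          rw [← hXY] at h1
          have := hub _ h1
          omega
        have hvle : v ≤ c := by
          have h1 : x₀ + v ∈ X + Y := Finset.add_mem_add hx₀ hv
          rw [← hXY] at h1
          have := hub _ h1
          omega
        rcases hclass u (hXS u hu) with h1 | h1 | ⟨a, ha, h1⟩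
        · rcases hclass v (hYS v hv) with g1 | g1 | ⟨a', ha', g1⟩ <;> omega
        · rcases hclass v (hYS v hv) with g1 | g1 | ⟨a', ha', g1⟩ <;> omega
        · omega
      · have := hle a' ha'; omega
    · have ha' := hle a ha
      have hy : y₀ ≤ m := by omega
      exact Or.inr (key Y X hY0 hX0 (by rw [hXY, add_comm]) y₀ hy₀ x₀ hx₀ (by omega) hy)
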